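/- arXiv:0802.1360 — 2 statements merged into one kernel-verified Lean document; each statement's English description precedes it below -/
import Mathlib

section
/- Let Φ: M_{d_A} → M_{d_B} be degradable with degrading map Ψ (Ψ∘Φ = Φ^C). For a pure state |ψ⟩ let B_ψ = range Φ(|ψ⟩⟨ψ|) and E_ψ = range Φ^C(|ψ⟩⟨ψ|). Then for any vector |φ⟩ ∈ B_ψ, the range of Ψ(|φ⟩⟨φ|) is contained in E_ψ. -/
open Matrix Kronecker BigOperators ComplexOrder

noncomputable def krausMap {n m ι : Type*} [Fintype n] [Fintype ι]
    (A : ι → Matrix m n ℂ) : Matrix n n ℂ →ₗ[ℂ] Matrix m m ℂ where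
  toFun ρ := ∑ k, A k * ρ * (A k)ᴴ
  map_add' ρ σ := by
    simp [Matrix.mul_add, Matrix.add_mul, Finset.sum_add_distrib]
  map_smul' c ρ := by
    simp [Matrix.mul_smul, Matrix.smul_mul, Finset.smul_sum]

noncomputable def complementMap {n m ι : Type*} [Fintype n] [Fintype m] [Fintype ι]
    (A : ι → Matrix m n ℂ) : Matrix n n ℂ →ₗ[ℂ] Matrix ι ι ℂ where
  toFun ρ := Matrix.of fun j k => (A j * ρ * (A k)ᴴ).trace
  map_add' ρ σ := by
    ext j k
    simp [Matrix.mul_add, Matrix.add_mul]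
  map_smul' c ρ := by
    ext j k
    simp [Matrix.mul_smul, Matrix.smul_mul]

noncomputable def choi {n m : Type*} [Fintype n] [DecidableEq n]
    (Φ : Matrix n n ℂ →ₗ[ℂ] Matrix m m ℂ) : Matrix (n × m) (n × m) ℂ :=
  Matrix.of fun p q => Φ (Matrix.single p.1 q.1 1) p.2 q.2

def IsCPTP {n m : Type*} [Fintype n] [DecidableEq n] [Fintype m]
    (Φ : Matrix n n ℂ →ₗ[ℂ] Matrix m m ℂ) : Prop :=
  (choi Φ).PosSemidef ∧ ∀ ρ, (Φ ρ).trace = ρ.trace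

def IsKrausRep {n m ι : Type*} [Fintype n] [DecidableEq n] [Fintype m] [Fintype ι]
    (A : ι → Matrix m n ℂ) (Φ : Matrix n n ℂ →ₗ[ℂ] Matrix m m ℂ) : Prop :=
  (∀ ρ, Φ ρ = ∑ k, A k * ρ * (A k)ᴴ) ∧ ∑ k, (A k)ᴴ * A k = 1

def Degradable {n m : Type*} [Fintype n] [DecidableEq n] [Fintype m] [DecidableEq m]
    (Φ : Matrix n n ℂ →ₗ[ℂ] Matrix m m ℂ) : Prop :=
  ∃ (e : ℕ) (A : Fin e → Matrix m n ℂ), IsKrausRep A Φ ∧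
    ∃ Ψ : Matrix m m ℂ →ₗ[ℂ] Matrix (Fin e) (Fin e) ℂ,
      IsCPTP Ψ ∧ Ψ ∘ₗ Φ = complementMap A

def AntiDegradable {n m : Type*} [Fintype n] [DecidableEq n] [Fintype m] [DecidableEq m]
    (Φ : Matrix n n ℂ →ₗ[ℂ] Matrix m m ℂ) : Prop :=
  ∃ (e : ℕ) (A : Fin e → Matrix m n ℂ), IsKrausRep A Φ ∧
    ∃ Λ : Matrix (Fin e) (Fin e) ℂ →ₗ[ℂ] Matrix m m ℂ,
      IsCPTP Λ ∧ Λ ∘ₗ complementMap A = Φ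

lemma range_toEuclideanLin_eq {n : ℕ} {R : Matrix (Fin n) (Fin n) ℂ} (hR : R.IsHermitian) :
    LinearMap.range (toEuclideanLin R) = (LinearMap.ker (toEuclideanLin R))ᗮ := by
  have hsymm := Matrix.isHermitian_iff_isSymmetric.1 hR
  refine Submodule.eq_of_le_of_finrank_le ?_ ?_
  · rintro _ ⟨x, rfl⟩
    intro z hz
    rw [LinearMap.mem_ker] at hz
    rw [← hsymm z x, hz, inner_zero_left]
  · have h1 := Submodule.finrank_add_finrank_orthogonal (K := LinearMap.ker (toEuclideanLin R))
    have h2 := LinearMap.finrank_range_add_finrank_ker (toEuclideanLin R)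
    omega

lemma range_le_of_psd_le {n : ℕ} {P Q : Matrix (Fin n) (Fin n) ℂ}
    (hP : P.PosSemidef) (hQ : Q.PosSemidef) (hle : (Q - P).PosSemidef) :
    LinearMap.range P.mulVecLin ≤ LinearMap.range Q.mulVecLin := by
  have hker : LinearMap.ker (toEuclideanLin Q) ≤ LinearMap.ker (toEuclideanLin P) := by
    intro z hz
    rw [LinearMap.mem_ker] at hz ⊢
    rw [toEuclideanLin_apply] at hz ⊢
    have hz' : Q *ᵥ (WithLp.equiv 2 (Fin n → ℂ)) z = 0 := by
      have := congrArg (WithLp.equiv 2 (Fin n → ℂ)) hz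
      simpa using this
    have h0 : star ((WithLp.equiv 2 (Fin n → ℂ)) z) ⬝ᵥ P *ᵥ ((WithLp.equiv 2 (Fin n → ℂ)) z) = 0 := by
      set v := (WithLp.equiv 2 (Fin n → ℂ)) z
      have hle' := hle.dotProduct_mulVec_nonneg v
      rw [sub_mulVec, dotProduct_sub, hz', dotProduct_zero, zero_sub] at hle'
      have hge := hP.dotProduct_mulVec_nonneg v
      exact le_antisymm (neg_nonneg.mp hle') hge
    have := (hP.dotProduct_mulVec_zero_iff _).1 h0
    rw [show P *ᵥ z.ofLp = 0 from this]
    simp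
  intro y hy
  obtain ⟨x, hx⟩ := hy
  rw [Matrix.mulVecLin_apply] at hx
  have h1 : (WithLp.equiv 2 (Fin n → ℂ)).symm y ∈ LinearMap.range (toEuclideanLin P) :=
    ⟨(WithLp.equiv 2 (Fin n → ℂ)).symm x, by rw [toEuclideanLin_apply]; simp [hx]⟩
  rw [range_toEuclideanLin_eq hP.1] at h1
  have h2 : (WithLp.equiv 2 (Fin n → ℂ)).symm y ∈ LinearMap.range (toEuclideanLin Q) := by
    rw [range_toEuclideanLin_eq hQ.1]
    intro z hz
    exact h1 z (hker hz)
  obtain ⟨x', hx'⟩ := h2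
  refine ⟨(WithLp.equiv 2 (Fin n → ℂ)) x', ?_⟩
  rw [Matrix.mulVecLin_apply]
  rw [toEuclideanLin_apply] at hx'
  have := congrArg (WithLp.equiv 2 (Fin n → ℂ)) hx'
  simpa using this

lemma lmap_entry {n m : Type*} [Fintype n] [DecidableEq n] [Fintype m]
    (Ψ : Matrix n n ℂ →ₗ[ℂ] Matrix m m ℂ)
    (X : Matrix n n ℂ) (i j : m) :
    Ψ X i j = ∑ p, ∑ q, X p q * choi Ψ (p, i) (q, j) := by
  nth_rewrite 1 [Matrix.matrix_eq_sum_single X]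
  rw [map_sum]
  rw [Matrix.sum_apply]
  refine Finset.sum_congr rfl fun p _ => ?_
  rw [map_sum, Matrix.sum_apply]
  refine Finset.sum_congr rfl fun q _ => ?_
  have : Matrix.single p q (X p q) = X p q • Matrix.single p q (1 : ℂ) := by
    rw [Matrix.smul_single, smul_eq_mul, mul_one]
  rw [this, _root_.map_smul, Matrix.smul_apply, smul_eq_mul]
  rfl

lemma choi_psd_rankOne {n m : Type*} [Fintype n] [DecidableEq n] [Fintype m]
    (Ψ : Matrix n n ℂ →ₗ[ℂ] Matrix m m ℂ) (hC : (choi Ψ).PosSemidef) (w : n → ℂ) :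
    (Ψ (vecMulVec w (star w))).PosSemidef := by
  have hC1 : ∀ x y, star (choi Ψ x y) = choi Ψ y x := fun x y => by
    rw [← Matrix.conjTranspose_apply, hC.1]
  refine PosSemidef.of_dotProduct_mulVec_nonneg ?_ ?_
  · ext i j
    simp only [conjTranspose_apply, lmap_entry, star_sum, star_mul', vecMulVec_apply,
      Pi.star_apply, star_star]
    rw [Finset.sum_comm]
    refine Finset.sum_congr rfl fun p _ => ?_
    refine Finset.sum_congr rfl fun q _ => ?_
    rw [hC1]
    ring
  · intro v
    have key : star v ⬝ᵥ (Ψ (vecMulVec w (star w))) *ᵥ v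
        = star (fun pi : n × m => star (w pi.1) * v pi.2) ⬝ᵥ
            (choi Ψ) *ᵥ (fun pi : n × m => star (w pi.1) * v pi.2) := by
      simp only [dotProduct, mulVec, lmap_entry, vecMulVec_apply, Pi.star_apply, star_mul',
        star_star, Fintype.sum_prod_type, Finset.mul_sum, Finset.sum_mul]
      have swap : ∀ (f : m → n → ℂ), ∑ i : m, ∑ p : n, f i p = ∑ p : n, ∑ i : m, f i p :=
        fun f => Finset.sum_comm
      simp only [swap]
      refine Finset.sum_congr rfl fun p _ => ?_
      refine Finset.sum_congr rfl fun q _ => ?_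
      refine Finset.sum_congr rfl fun i _ => ?_
      refine Finset.sum_congr rfl fun j _ => ?_
      ring
    rw [key]
    exact hC.dotProduct_mulVec_nonneg _

lemma decomp_conjTranspose_mul {n : Type*} [Fintype n] (B : Matrix n n ℂ) :
    Bᴴ * B = ∑ k, vecMulVec (star (B k)) (B k) := by
  ext p q
  rw [Matrix.sum_apply, Matrix.mul_apply]
  refine Finset.sum_congr rfl fun k _ => ?_
  rw [vecMulVec_apply, Pi.star_apply, conjTranspose_apply]

lemma posSemidef_sum {ι n : Type*} [Fintype n] {s : Finset ι} {f : ι → Matrix n n ℂ}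
    (h : ∀ i ∈ s, (f i).PosSemidef) : (∑ i ∈ s, f i).PosSemidef := by
  classical
  induction s using Finset.induction with
  | empty => simpa using Matrix.PosSemidef.zero
  | insert x s hx ih =>
    rw [Finset.sum_insert hx]
    exact (h _ (Finset.mem_insert_self _ _)).add (ih fun i hi => h i (Finset.mem_insert_of_mem hi))

lemma psd_map {n m : Type*} [Fintype n] [DecidableEq n] [Fintype m]
    (Ψ : Matrix n n ℂ →ₗ[ℂ] Matrix m m ℂ) (hC : (choi Ψ).PosSemidef)
    {X : Matrix n n ℂ} (hX : X.PosSemidef) : (Ψ X).PosSemidef := by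
  obtain ⟨B, rfl⟩ : ∃ B : Matrix n n ℂ, X = Bᴴ * B := by
    open scoped MatrixOrder in exact CStarAlgebra.nonneg_iff_eq_star_mul_self.mp hX.nonneg
  rw [decomp_conjTranspose_mul, map_sum]
  apply _root_.posSemidef_sum
  intro k _
  have := choi_psd_rankOne Ψ hC (star (B k))
  rwa [star_star] at this

lemma cs_dot {n : Type*} [Fintype n] (a b : n → ℂ) :
    (star a ⬝ᵥ b) * (star b ⬝ᵥ a) ≤ (star a ⬝ᵥ a) * (star b ⬝ᵥ b) := by
  have key : ∀ u v : n → ℂ, star u ⬝ᵥ v =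
      (inner ℂ ((WithLp.equiv 2 (n → ℂ)).symm u) ((WithLp.equiv 2 (n → ℂ)).symm v) : ℂ) := by
    intro u v
    simp [PiLp.inner_apply, RCLike.inner_apply, dotProduct]
    exact Finset.sum_congr rfl fun _ _ => mul_comm _ _
  set a' : EuclideanSpace ℂ n := (WithLp.equiv 2 (n → ℂ)).symm a with ha'
  set b' : EuclideanSpace ℂ n := (WithLp.equiv 2 (n → ℂ)).symm b with hb'
  rw [key a b, key b a, key a a, key b b, ← ha', ← hb']
  rw [← inner_conj_symm b' a', Complex.mul_conj]
  rw [inner_self_eq_norm_sq_to_K (𝕜 := ℂ) a', inner_self_eq_norm_sq_to_K (𝕜 := ℂ) b']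
  have h1 : Complex.normSq (inner ℂ a' b') = ‖(inner ℂ a' b' : ℂ)‖ ^ 2 := by
    rw [← Complex.sq_norm]
  rw [h1]
  have h2 : ‖(inner ℂ a' b' : ℂ)‖ ^ 2 ≤ ‖a'‖ ^ 2 * ‖b'‖ ^ 2 := by
    rw [← mul_pow]
    exact pow_le_pow_left₀ (norm_nonneg _) (norm_inner_le_norm a' b') 2
  calc (↑(‖(inner ℂ a' b' : ℂ)‖ ^ 2) : ℂ) ≤ ↑(‖a'‖ ^ 2 * ‖b'‖ ^ 2) := (RCLike.ofReal_le_ofReal (K := ℂ)).mpr h2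
    _ = ↑‖a'‖ ^ 2 * ↑‖b'‖ ^ 2 := by push_cast; ring

lemma dot_vecMulVec {n : Type*} [Fintype n] (φ v : n → ℂ) :
    star v ⬝ᵥ (vecMulVec φ (star φ)) *ᵥ v = (star v ⬝ᵥ φ) * (star φ ⬝ᵥ v) := by
  simp only [dotProduct, mulVec, vecMulVec_apply, Pi.star_apply, Finset.mul_sum,
    Finset.sum_mul]
  rw [Finset.sum_comm]
  refine Finset.sum_congr rfl fun i _ => ?_
  refine Finset.sum_congr rfl fun j _ => ?_
  ring

lemma dot_star_comm {n : Type*} [Fintype n] (u v : n → ℂ) :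
    star u ⬝ᵥ v = star (star v ⬝ᵥ u) := by
  simp only [dotProduct, star_sum, star_mul', Pi.star_apply, star_star]
  exact Finset.sum_congr rfl fun i _ => mul_comm _ _

lemma vecMulVec_star_posSemidef {n : Type*} [Fintype n] (w : n → ℂ) :
    (vecMulVec w (star w)).PosSemidef := by
  refine PosSemidef.of_dotProduct_mulVec_nonneg ?_ ?_
  · ext i j
    simp only [conjTranspose_apply, vecMulVec_apply, Pi.star_apply, star_mul', star_star]
    ring
  · intro v
    rw [dot_vecMulVec, dot_star_comm w v]
    set z := star v ⬝ᵥ w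
    rw [show z * star z = z * (starRingEnd ℂ) z from rfl, Complex.mul_conj]
    exact_mod_cast Complex.normSq_nonneg z

lemma dot_conj_mul {n : Type*} [Fintype n] (B : Matrix n n ℂ) (v w : n → ℂ) :
    star v ⬝ᵥ (Bᴴ * B) *ᵥ w = star (B *ᵥ v) ⬝ᵥ (B *ᵥ w) := by
  rw [← mulVec_mulVec, dotProduct_mulVec, ← star_mulVec]

lemma rankOne_le_smul {n : Type*} [Fintype n] {M : Matrix n n ℂ}
    (hM : M.PosSemidef) (x : n → ℂ) :
    ((star x ⬝ᵥ M *ᵥ x) • M - vecMulVec (M *ᵥ x) (star (M *ᵥ x))).PosSemidef := by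
  obtain ⟨B, rfl⟩ : ∃ B : Matrix n n ℂ, M = Bᴴ * B := by
    classical
    open scoped MatrixOrder in exact CStarAlgebra.nonneg_iff_eq_star_mul_self.mp hM.nonneg
  set y := B *ᵥ x with hy
  have hc : star x ⬝ᵥ (Bᴴ * B) *ᵥ x = star y ⬝ᵥ y := dot_conj_mul B x x
  have hcstar : star (star y ⬝ᵥ y) = star y ⬝ᵥ y := by
    rw [← dot_star_comm y y]
  refine PosSemidef.of_dotProduct_mulVec_nonneg ?_ ?_
  · have h4 : ((star x ⬝ᵥ (Bᴴ * B) *ᵥ x) • (Bᴴ * B)).IsHermitian := by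
      show _ᴴ = _
      rw [conjTranspose_smul, hM.1, hc, hcstar]
    exact h4.sub (vecMulVec_star_posSemidef _).1
  · intro v
    rw [sub_mulVec, dotProduct_sub, smul_mulVec, dotProduct_smul, smul_eq_mul,
      dot_vecMulVec, hc]
    set z := B *ᵥ v with hz
    have h1 : star v ⬝ᵥ (Bᴴ * B) *ᵥ v = star z ⬝ᵥ z := dot_conj_mul B v v
    have h2 : star v ⬝ᵥ (Bᴴ * B) *ᵥ x = star z ⬝ᵥ y := dot_conj_mul B v x
    have h3 : star ((Bᴴ * B) *ᵥ x) ⬝ᵥ v = star y ⬝ᵥ z := by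
      rw [dot_star_comm, h2, ← dot_star_comm]
    rw [h1, h2, h3, sub_nonneg]
    calc (star z ⬝ᵥ y) * (star y ⬝ᵥ z) ≤ (star z ⬝ᵥ z) * (star y ⬝ᵥ y) := cs_dot z y
      _ = (star y ⬝ᵥ y) * (star z ⬝ᵥ z) := mul_comm _ _
/-- if `Ψ` degrades `Φ` to its complement, then for any pure input `ψ`
and any vector `φ` in the range of `Φ(|ψ⟩⟨ψ|)`, the range of `Ψ(|φ⟩⟨φ|)` is contained
in the range of `Φ^C(|ψ⟩⟨ψ|)`. -/
theorem degrading_map_range_lemma {a b e : ℕ}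
    (A : Fin e → Matrix (Fin b) (Fin a) ℂ)
    (hTP : ∑ k, (A k)ᴴ * A k = 1)
    (Ψ : Matrix (Fin b) (Fin b) ℂ →ₗ[ℂ] Matrix (Fin e) (Fin e) ℂ)
    (hΨ : IsCPTP Ψ) (hdeg : Ψ ∘ₗ krausMap A = complementMap A)
    (ψ : Fin a → ℂ) (hψ : star ψ ⬝ᵥ ψ = 1)
    (φ : Fin b → ℂ)
    (hφ : φ ∈ LinearMap.range (krausMap A (Matrix.vecMulVec ψ (star ψ))).mulVecLin) :
    LinearMap.range (Ψ (Matrix.vecMulVec φ (star φ))).mulVecLin ≤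
      LinearMap.range (complementMap A (Matrix.vecMulVec ψ (star ψ))).mulVecLin := by
  classical
  set ρ := vecMulVec ψ (star ψ) with hρdef
  have hρ : ρ.PosSemidef := vecMulVec_star_posSemidef ψ
  set M := krausMap A ρ with hMdef
  have hM : M.PosSemidef := by
    show (∑ k, A k * ρ * (A k)ᴴ).PosSemidef
    exact _root_.posSemidef_sum fun k _ => hρ.mul_mul_conjTranspose_same (A k)
  obtain ⟨x, hx⟩ := hφ
  rw [Matrix.mulVecLin_apply] at hx
  have hcomp : complementMap A ρ = Ψ M := by rw [← hdeg]; rfl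
  rw [hcomp]
  have hP : (Ψ (vecMulVec φ (star φ))).PosSemidef :=
    psd_map Ψ hΨ.1 (vecMulVec_star_posSemidef φ)
  have hdom : ((star x ⬝ᵥ M *ᵥ x) • M - vecMulVec φ (star φ)).PosSemidef := by
    rw [← hx]; exact rankOne_le_smul hM x
  set c := star x ⬝ᵥ M *ᵥ x with hcdef
  have h2 : ((c • Ψ M) - Ψ (vecMulVec φ (star φ))).PosSemidef := by
    have := psd_map Ψ hΨ.1 hdom
    rwa [map_sub, _root_.map_smul] at this
  have hQ : (c • Ψ M).PosSemidef := by
    have := h2.add hP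
    rwa [sub_add_cancel] at this
  refine le_trans (range_le_of_psd_le hP hQ h2) ?_
  rintro _ ⟨u, rfl⟩
  refine ⟨c • u, ?_⟩
  rw [Matrix.mulVecLin_apply, Matrix.mulVecLin_apply, mulVec_smul, smul_mulVec]
end

section
/- Let N: M_d → M_d be any CPT map, and define Φ: M_d → M_2 ⊗ M_d by Φ(ρ) = ½|0⟩⟨0|⊗ρ + ½|1⟩⟨1|⊗N(ρ). Then Φ is degradable: the map Ψ defined on product states by Ψ(τ⊗γ) = ⟨0|τ|0⟩ N^C(γ) ⊕ ⟨1|τ|1⟩ (Tr γ)·σ (where the direct sum structure matches Φ^C) is a CPT map satisfying Ψ∘Φ = Φ^C, where Φ^C(ρ) = ½|0⟩⟨0| (Tr ρ) + ½|1⟩⟨1|⊗N^C(ρ). -/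
open Matrix Kronecker BigOperators ComplexOrder

/-- The Kraus operators `{ |0⟩⊗I/√2 } ∪ { |1⟩⊗B_k/√2 }` of the flagged channel
`Φ(ρ) = ½|0⟩⟨0|⊗ρ + ½|1⟩⟨1|⊗N(ρ)`, where `B` is a Kraus family for `N`. -/
noncomputable def bigA {d f : ℕ} (B : Fin f → Matrix (Fin d) (Fin d) ℂ) :
    Fin (f + 1) → Matrix (Fin 2 × Fin d) (Fin d) ℂ :=
  Fin.cases
    (Matrix.of fun p j => if p.1 = 0 ∧ p.2 = j then (Real.sqrt 2 : ℂ)⁻¹ else 0)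
    (fun k => Matrix.of fun p j => if p.1 = 1 then (Real.sqrt 2 : ℂ)⁻¹ * B k p.2 j else 0)

/- ### Auxiliary lemmas -/

lemma choi_krausMap_apply {n m ι : Type*} [Fintype n] [DecidableEq n] [Fintype ι]
    (A : ι → Matrix m n ℂ) (p q : n × m) :
    choi (krausMap A) p q = ∑ k, A k p.2 p.1 * (starRingEnd ℂ) (A k q.2 q.1) := by
  simp [choi, krausMap, Matrix.mul_apply, Matrix.single, conjTranspose_apply,
    Matrix.sum_apply, ite_and, Finset.sum_ite_eq, Finset.sum_ite_eq', ite_mul, mul_ite,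
    mul_zero, zero_mul, Finset.mul_sum]

lemma choi_krausMap_posSemidef {n m ι : Type*} [Fintype n] [DecidableEq n] [Fintype m] [Fintype ι]
    (A : ι → Matrix m n ℂ) : (choi (krausMap A)).PosSemidef := by
  have h : choi (krausMap A) = ∑ k,
      (Matrix.of fun (_ : Fin 1) p => (starRingEnd ℂ) (A k p.2 p.1))ᴴ *
      (Matrix.of fun (_ : Fin 1) p => (starRingEnd ℂ) (A k p.2 p.1)) := by
    ext p q
    simp [choi_krausMap_apply, Matrix.sum_apply, Matrix.mul_apply, conjTranspose_apply]
  rw [h]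
  exact Finset.sum_induction _ Matrix.PosSemidef (fun a b ha hb => ha.add hb)
    Matrix.PosSemidef.zero (fun k _ => Matrix.posSemidef_conjTranspose_mul_self _)

lemma krausMap_trace {n m ι : Type*} [Fintype n] [DecidableEq n] [Fintype m] [Fintype ι]
    (A : ι → Matrix m n ℂ) (h : ∑ k, (A k)ᴴ * A k = 1)
    (ρ : Matrix n n ℂ) : (krausMap A ρ).trace = ρ.trace := by
  have h1 : (krausMap A ρ).trace = ∑ k, ((A k)ᴴ * A k * ρ).trace := by
    show (∑ k, A k * ρ * (A k)ᴴ).trace = _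
    rw [Matrix.trace_sum]
    refine Finset.sum_congr rfl fun k _ => ?_
    rw [Matrix.trace_mul_cycle, Matrix.mul_assoc]
  rw [h1]
  have h2 : ∑ k, ((A k)ᴴ * A k * ρ).trace = ((∑ k, (A k)ᴴ * A k) * ρ).trace := by
    rw [Finset.sum_mul, Matrix.trace_sum]
  rw [h2, h, Matrix.one_mul]

lemma sqrt2_inv_sq : ((Real.sqrt 2 : ℂ))⁻¹ * ((Real.sqrt 2 : ℂ))⁻¹ = (2 : ℂ)⁻¹ := by
  rw [← mul_inv]; congr 1; norm_cast; exact Real.mul_self_sqrt (by norm_num)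

lemma conj_sqrt2_inv : (starRingEnd ℂ) ((Real.sqrt 2 : ℂ))⁻¹ = ((Real.sqrt 2 : ℂ))⁻¹ := by
  rw [map_inv₀, Complex.conj_ofReal]

/-- Kraus operators of the degrading map `Ψ`. -/
noncomputable def psiKraus {d f : ℕ} (B : Fin f → Matrix (Fin d) (Fin d) ℂ) :
    (Fin d ⊕ Fin d) → Matrix (Fin (f + 1)) (Fin 2 × Fin d) ℂ :=
  Sum.elim
    (fun a => Matrix.of fun s p =>
      Fin.cases (motive := fun _ => ℂ) 0 (fun j => if p.1 = 0 then B j a p.2 else 0) s)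
    (fun i => Matrix.of fun s p => if s = 0 ∧ p.1 = 1 ∧ p.2 = i then 1 else 0)

lemma psiKraus_norm {d f : ℕ} (B : Fin f → Matrix (Fin d) (Fin d) ℂ)
    (hB : ∑ k, (B k)ᴴ * B k = 1) :
    ∑ l, (psiKraus B l)ᴴ * psiKraus B l = 1 := by
  ext p q
  obtain ⟨u, b⟩ := p
  obtain ⟨v, c⟩ := q
  rw [Fintype.sum_sum_type]
  have hBe : ∀ b c : Fin d, ∑ j, ∑ a, (starRingEnd ℂ) (B j a b) * B j a c
      = if b = c then 1 else 0 := by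
    intro b c
    have := Matrix.ext_iff.mpr hB b c
    rw [Matrix.sum_apply] at this
    simpa [Matrix.mul_apply, Matrix.conjTranspose_apply, Matrix.one_apply] using this
  simp only [Matrix.sum_apply, Matrix.add_apply, Matrix.mul_apply, conjTranspose_apply,
    psiKraus, Sum.elim_inl, Sum.elim_inr, Matrix.of_apply]
  simp only [Fin.sum_univ_succ, Fin.cases_zero, Fin.cases_succ, star_zero, zero_mul,
    zero_add, RCLike.star_def, apply_ite (starRingEnd ℂ), map_zero, _root_.map_one, ite_and,
    ite_mul, mul_ite, mul_zero, zero_mul, mul_one, one_mul, Finset.sum_ite_eq,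
    Finset.sum_ite_eq', Finset.mem_univ, if_true, Finset.sum_const_zero,
    Matrix.one_apply, Prod.mk.injEq]
  rw [Finset.sum_comm]
  fin_cases u <;> fin_cases v <;>
    simp [hBe, Fin.mk_zero, Fin.mk_one]

set_option maxHeartbeats 2000000 in
/-- for any CPT map `N`, the channel `Φ(ρ) = ½|0⟩⟨0|⊗ρ + ½|1⟩⟨1|⊗N(ρ)`
is degradable: some CPTP `Ψ` satisfies `Ψ ∘ Φ = Φ^C`. -/
theorem flagged_identity_channel_degradable {d f : ℕ}
    (B : Fin f → Matrix (Fin d) (Fin d) ℂ)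
    (hB : ∑ k, (B k)ᴴ * B k = 1) :
    (∀ ρ : Matrix (Fin d) (Fin d) ℂ,
      krausMap (bigA B) ρ = Matrix.of fun p q =>
        if p.1 = 0 ∧ q.1 = 0 then (2 : ℂ)⁻¹ * ρ p.2 q.2
        else if p.1 = 1 ∧ q.1 = 1 then (2 : ℂ)⁻¹ * (krausMap B ρ) p.2 q.2
        else 0) ∧
    ∃ Ψ : Matrix (Fin 2 × Fin d) (Fin 2 × Fin d) ℂ →ₗ[ℂ] Matrix (Fin (f + 1)) (Fin (f + 1)) ℂ,
      IsCPTP Ψ ∧ Ψ ∘ₗ krausMap (bigA B) = complementMap (bigA B) := by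
  have hform : ∀ ρ : Matrix (Fin d) (Fin d) ℂ,
      krausMap (bigA B) ρ = Matrix.of fun p q =>
        if p.1 = 0 ∧ q.1 = 0 then (2 : ℂ)⁻¹ * ρ p.2 q.2
        else if p.1 = 1 ∧ q.1 = 1 then (2 : ℂ)⁻¹ * (krausMap B ρ) p.2 q.2
        else 0 := by
    intro ρ
    ext p q
    obtain ⟨p1, p2⟩ := p
    obtain ⟨q1, q2⟩ := q
    show (∑ k, bigA B k * ρ * (bigA B k)ᴴ) (p1,p2) (q1,q2) = _
    rw [Fin.sum_univ_succ]
    simp only [bigA, Fin.cases_zero, Fin.cases_succ, Matrix.sum_apply, Matrix.add_apply,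
      Matrix.mul_apply, conjTranspose_apply, Matrix.of_apply, ite_and, ite_mul, mul_ite,
      zero_mul, mul_zero, apply_ite (starRingEnd ℂ), _root_.map_mul, map_zero, conj_sqrt2_inv,
      Finset.sum_ite_eq, Finset.sum_ite_eq', Finset.mem_univ, if_true]
    fin_cases p1 <;> fin_cases q1 <;>
      simp [Fin.mk_zero, Fin.mk_one, mul_ite, ite_mul, Finset.sum_ite_eq, Finset.sum_ite_eq',
        RCLike.star_def, conj_sqrt2_inv]
    · simp only [apply_ite (starRingEnd ℂ), conj_sqrt2_inv, map_zero, mul_ite, mul_zero,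
        Finset.sum_ite_eq, Finset.mem_univ, if_true, mul_assoc, sqrt2_inv_sq]
      ring_nf
      rw [sq, sqrt2_inv_sq]
      ring
    · show _ = 2⁻¹ * (∑ k, B k * ρ * (B k)ᴴ) p2 q2
      simp only [Matrix.sum_apply, Matrix.mul_apply, conjTranspose_apply, Finset.mul_sum,
        Finset.sum_mul]
      refine Finset.sum_congr rfl fun k _ => Finset.sum_congr rfl fun x1 _ => ?_
      refine Finset.sum_congr rfl fun x2 _ => ?_
      rw [← sqrt2_inv_sq, RCLike.star_def]
      ring
  refine ⟨hform, krausMap (psiKraus B), ⟨choi_krausMap_posSemidef _,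
    fun ρ => krausMap_trace _ (psiKraus_norm B hB) ρ⟩, ?_⟩
  apply LinearMap.ext
  intro ρ
  ext j k
  show krausMap (psiKraus B) (krausMap (bigA B) ρ) j k = (bigA B j * ρ * (bigA B k)ᴴ).trace
  rw [hform ρ]
  induction j using Fin.cases with
  | zero =>
    induction k using Fin.cases with
    | zero =>
      simp [krausMap, complementMap, LinearMap.coe_mk, AddHom.coe_mk, Matrix.trace,
        Matrix.diag, Fintype.sum_sum_type, Matrix.sum_apply, Matrix.add_apply, Matrix.mul_apply,
        conjTranspose_apply, psiKraus, bigA, Fin.cases_zero, Fin.cases_succ, Sum.elim_inl,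
        Sum.elim_inr, Matrix.of_apply, Fintype.sum_prod_type, Fin.sum_univ_two,
        ite_and, ite_mul, mul_ite, zero_mul, mul_zero, star_zero,
        Finset.sum_const_zero, add_zero, zero_add, Finset.sum_ite_eq, Finset.sum_ite_eq',
        Finset.mem_univ, if_true, one_mul, mul_one, RCLike.star_def,
        apply_ite (starRingEnd ℂ), map_zero, conj_sqrt2_inv, _root_.map_mul,
        Fin.succ_ne_zero, Fin.zero_eq_one_iff, Fin.one_eq_zero_iff]
      have ht := krausMap_trace B hB ρ
      simp only [Matrix.trace, Matrix.diag, krausMap, LinearMap.coe_mk, AddHom.coe_mk,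
        Matrix.sum_apply, Matrix.mul_apply, conjTranspose_apply, RCLike.star_def] at ht
      rw [← Finset.mul_sum]
      have h2 : ∑ x : Fin d, ((Real.sqrt 2 : ℂ))⁻¹ * ρ x x * ((Real.sqrt 2 : ℂ))⁻¹
          = 2⁻¹ * ∑ x, ρ x x := by
        rw [Finset.mul_sum]
        refine Finset.sum_congr rfl fun x _ => ?_
        rw [← sqrt2_inv_sq]; ring
      rw [h2, ht]
    | succ k' =>
      simp [krausMap, complementMap, LinearMap.coe_mk, AddHom.coe_mk, Matrix.trace,
        Matrix.diag, Fintype.sum_sum_type, Matrix.sum_apply, Matrix.add_apply, Matrix.mul_apply,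
        conjTranspose_apply, psiKraus, bigA, Fin.cases_zero, Fin.cases_succ, Sum.elim_inl,
        Sum.elim_inr, Matrix.of_apply, Fintype.sum_prod_type, Fin.sum_univ_two,
        ite_and, ite_mul, mul_ite, zero_mul, mul_zero, star_zero,
        Finset.sum_const_zero, add_zero, zero_add, Finset.sum_ite_eq, Finset.sum_ite_eq',
        Finset.mem_univ, if_true, one_mul, mul_one, RCLike.star_def,
        apply_ite (starRingEnd ℂ), map_zero, conj_sqrt2_inv, _root_.map_mul,
        Fin.succ_ne_zero, Fin.zero_eq_one_iff, Fin.one_eq_zero_iff]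
  | succ j' =>
    induction k using Fin.cases with
    | zero =>
      simp [krausMap, complementMap, LinearMap.coe_mk, AddHom.coe_mk, Matrix.trace,
        Matrix.diag, Fintype.sum_sum_type, Matrix.sum_apply, Matrix.add_apply, Matrix.mul_apply,
        conjTranspose_apply, psiKraus, bigA, Fin.cases_zero, Fin.cases_succ, Sum.elim_inl,
        Sum.elim_inr, Matrix.of_apply, Fintype.sum_prod_type, Fin.sum_univ_two,
        ite_and, ite_mul, mul_ite, zero_mul, mul_zero, star_zero,
        Finset.sum_const_zero, add_zero, zero_add, Finset.sum_ite_eq, Finset.sum_ite_eq',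
        Finset.mem_univ, if_true, one_mul, mul_one, RCLike.star_def,
        apply_ite (starRingEnd ℂ), map_zero, conj_sqrt2_inv, _root_.map_mul,
        Fin.succ_ne_zero, Fin.zero_eq_one_iff, Fin.one_eq_zero_iff]
    | succ k' =>
      simp [krausMap, complementMap, LinearMap.coe_mk, AddHom.coe_mk, Matrix.trace,
        Matrix.diag, Fintype.sum_sum_type, Matrix.sum_apply, Matrix.add_apply, Matrix.mul_apply,
        conjTranspose_apply, psiKraus, bigA, Fin.cases_zero, Fin.cases_succ, Sum.elim_inl,
        Sum.elim_inr, Matrix.of_apply, Fintype.sum_prod_type, Fin.sum_univ_two,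
        ite_and, ite_mul, mul_ite, zero_mul, mul_zero, star_zero,
        Finset.sum_const_zero, add_zero, zero_add, Finset.sum_ite_eq, Finset.sum_ite_eq',
        Finset.mem_univ, if_true, one_mul, mul_one, RCLike.star_def,
        apply_ite (starRingEnd ℂ), map_zero, conj_sqrt2_inv, _root_.map_mul,
        Fin.succ_ne_zero, Fin.zero_eq_one_iff, Fin.one_eq_zero_iff]
      refine Finset.sum_congr rfl fun x _ => Finset.sum_congr rfl fun x1 _ => ?_
      rw [Finset.sum_mul, Finset.sum_mul]
      refine Finset.sum_congr rfl fun x2 _ => ?_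
      rw [← sqrt2_inv_sq]
      ring
end
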